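/- Let E be a finite ground set, let X ⊆ ℝ^E be a nonempty convex set with dim aff(X) = k, let {x_0, …, x_k} ⊆ X be an affine basis of X, and for F ⊆ E set A(F) := {x_i − x_0 : i ∈ {1, …, k}} ∪ {χ_e : e ∈ F}. Then the family 𝒜_X := {F ⊆ E : A(F) is linearly independent} is the collection of independent sets of a matroid on E, and the rank of this matroid equals |E| − k. -/

import Mathlib

/-- The family of vectors `A(F)` associated with an affine basis `x 0, …, x k` and a
set `F ⊆ E`: it consists of the vectors `x i - x 0` for `i = 1, …, k` together with
the standard unit vectors `χ_e` for `e ∈ F`. -/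
noncomputable def AFam {E : Type*} [Fintype E] [DecidableEq E] {k : ℕ}
    (x : Fin (k + 1) → E → ℝ) (F : Finset E) :
    (Fin k ⊕ {e : E // e ∈ F}) → E → ℝ :=
  Sum.elim (fun i => x i.succ - x 0) (fun e => Pi.single e.val (1 : ℝ))

section Aux

variable {V : Type*} [AddCommGroup V] [Module ℝ V]

/-- Adding to a linearly independent restricted family an element whose image is
outside its span keeps it linearly independent. -/
lemma li_insert_aux {E : Type*} [DecidableEq E] (u : E → V) {I : Finset E} {e : E}
    (heI : e ∉ I)
    (hI : LinearIndependent ℝ (fun a : {a : E // a ∈ I} => u a.val))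
    (he : u e ∉ Submodule.span ℝ (Set.range fun a : {a : E // a ∈ I} => u a.val)) :
    LinearIndependent ℝ (fun a : {a : E // a ∈ insert e I} => u a.val) := by
  have hopt := hI.option (x := u e) he
  have hcomp := hopt.comp _ (Finset.subtypeInsertEquivOption heI).injective
  have hfun : (fun a : {a : E // a ∈ insert e I} => u a.val) =
      (fun o : Option {a : E // a ∈ I} =>
        Option.casesOn' o (u e) fun a : {a : E // a ∈ I} => u a.val) ∘
        (Finset.subtypeInsertEquivOption heI) := by
    funext a
    by_cases h : (a : E) = e
    · simp [Finset.subtypeInsertEquivOption, h, Function.comp]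
    · simp [Finset.subtypeInsertEquivOption, h, Function.comp]
  rw [hfun]
  exact hcomp

lemma exists_notin_aux [FiniteDimensional ℝ V] {E : Type*} (u : E → V) (I T : Finset E)
    (hcard : I.card <
      Module.finrank ℝ (Submodule.span ℝ (Set.range fun a : {a : E // a ∈ T} => u a.val))) :
    ∃ e ∈ T, u e ∉ Submodule.span ℝ (Set.range fun a : {a : E // a ∈ I} => u a.val) := by
  by_contra h
  push_neg at h
  have hle : Submodule.span ℝ (Set.range fun a : {a : E // a ∈ T} => u a.val) ≤
      Submodule.span ℝ (Set.range fun a : {a : E // a ∈ I} => u a.val) := by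
    rw [Submodule.span_le]
    rintro _ ⟨a, rfl⟩
    exact h a a.2
  have h1 := Submodule.finrank_mono hle
  have h2 : Module.finrank ℝ
      (Submodule.span ℝ (Set.range fun a : {a : E // a ∈ I} => u a.val)) ≤ I.card := by
    haveI := Classical.decEq V
    refine (finrank_span_le_card _).trans ?_
    rw [Set.toFinset_range]
    exact (Finset.card_image_le).trans (by simp)
  omega

/-- A restricted family of maximal possible cardinality which is linearly independent
exists, provided the whole family spans. -/
lemma exists_full_aux [FiniteDimensional ℝ V] {E : Type*} [Fintype E] [DecidableEq E]
    (u : E → V) (hspan : Submodule.span ℝ (Set.range u) = ⊤) :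
    ∃ I : Finset E, LinearIndependent ℝ (fun a : {a : E // a ∈ I} => u a.val) ∧
      I.card = Module.finrank ℝ V := by
  have hur : (Set.range fun a : {a : E // a ∈ (Finset.univ : Finset E)} => u a.val) =
      Set.range u := by
    ext v
    constructor
    · rintro ⟨a, rfl⟩; exact ⟨a, rfl⟩
    · rintro ⟨a, rfl⟩; exact ⟨⟨a, Finset.mem_univ a⟩, rfl⟩
  have hfr : Module.finrank ℝ
      (Submodule.span ℝ (Set.range fun a : {a : E // a ∈ (Finset.univ : Finset E)} => u a.val)) =
      Module.finrank ℝ V := by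
    rw [hur, hspan, finrank_top]
  suffices h : ∀ m : ℕ, ∀ I : Finset E,
      LinearIndependent ℝ (fun a : {a : E // a ∈ I} => u a.val) →
      I.card + m = Module.finrank ℝ V →
      ∃ J : Finset E, LinearIndependent ℝ (fun a : {a : E // a ∈ J} => u a.val) ∧
        J.card = Module.finrank ℝ V by
    have hempty : LinearIndependent ℝ (fun a : {a : E // a ∈ (∅ : Finset E)} => u a.val) := by
      haveI : IsEmpty {a : E // a ∈ (∅ : Finset E)} := ⟨fun a => Finset.notMem_empty a.1 a.2⟩
      exact linearIndependent_empty_type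
    exact h (Module.finrank ℝ V) ∅ hempty (by simp)
  intro m
  induction m with
  | zero => exact fun I hI hc => ⟨I, hI, by omega⟩
  | succ n ih =>
    intro I hI hc
    obtain ⟨e, -, he⟩ := exists_notin_aux u I Finset.univ (by rw [hfr]; omega)
    have heI : e ∉ I := fun hmem => he (Submodule.subset_span ⟨⟨e, hmem⟩, rfl⟩)
    exact ih (insert e I) (li_insert_aux u heI hI he)
      (by rw [Finset.card_insert_of_notMem heI]; omega)

end Aux

lemma afam_iff {E : Type*} [Fintype E] [DecidableEq E] {k : ℕ}
    (x : Fin (k + 1) → E → ℝ)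
    (hd : LinearIndependent ℝ (fun i : Fin k => x i.succ - x 0)) (F : Finset E) :
    LinearIndependent ℝ (AFam x F) ↔
      LinearIndependent ℝ (fun e : {e : E // e ∈ F} =>
        (Submodule.span ℝ (Set.range fun i : Fin k => x i.succ - x 0)).mkQ
          (Pi.single e.val (1 : ℝ))) := by
  set W := Submodule.span ℝ (Set.range fun i : Fin k => x i.succ - x 0) with hW
  rw [AFam, linearIndependent_sum]
  simp only [Sum.elim_comp_inl, Sum.elim_comp_inr]
  constructor
  · rintro ⟨h1, h2, h3⟩
    have hdis : Disjoint
        (Submodule.span ℝ (Set.range fun e : {e : E // e ∈ F} => Pi.single e.val (1 : ℝ)))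
        (LinearMap.ker W.mkQ) := by
      rw [Submodule.ker_mkQ, hW]
      exact h3.symm
    exact ((h2.map hdis).comp (Equiv.refl _) (Equiv.refl _).injective :)
  · intro h
    have hcomp : LinearIndependent ℝ
        (W.mkQ ∘ fun e : {e : E // e ∈ F} => Pi.single e.val (1 : ℝ)) := h
    refine ⟨hd, hcomp.of_comp W.mkQ, ?_⟩
    have := Submodule.range_ker_disjoint hcomp
    rw [Submodule.ker_mkQ] at this
    exact this.symm

set_option maxHeartbeats 1000000 in
theorem stmt3 {E : Type*} [Fintype E] [DecidableEq E] (X : Set (E → ℝ))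
    (hX : X.Nonempty) (hconv : Convex ℝ X)
    (k : ℕ) (hdim : Module.finrank ℝ ↥(vectorSpan ℝ X) = k)
    (x : Fin (k + 1) → E → ℝ) (hxX : ∀ i, x i ∈ X)
    (hindep : AffineIndependent ℝ x)
    (hmax : ∀ y ∈ X, y ∉ Set.range x →
      ¬ AffineIndependent ℝ (Fin.cons y x : Fin (k + 2) → E → ℝ)) :
    LinearIndependent ℝ (AFam x (∅ : Finset E)) ∧
    (∀ I J : Finset E, I ⊆ J →
      LinearIndependent ℝ (AFam x J) → LinearIndependent ℝ (AFam x I)) ∧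
    (∀ I J : Finset E, LinearIndependent ℝ (AFam x I) →
      LinearIndependent ℝ (AFam x J) → I.card < J.card →
      ∃ e ∈ J, e ∉ I ∧ LinearIndependent ℝ (AFam x (insert e I))) ∧
    (∀ I : Finset E, LinearIndependent ℝ (AFam x I) →
      I.card + k ≤ Fintype.card E) ∧
    (∃ I : Finset E, LinearIndependent ℝ (AFam x I) ∧
      I.card + k = Fintype.card E) := by
  classical
  -- the difference vectors are linearly independent
  have hd : LinearIndependent ℝ (fun i : Fin k => x i.succ - x 0) := by
    have h := (affineIndependent_iff_linearIndependent_vsub ℝ x 0).1 hindep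
    have hinj : Function.Injective
        (fun i : Fin k => (⟨i.succ, Fin.succ_ne_zero i⟩ : {j : Fin (k + 1) // j ≠ 0})) := by
      intro a b hab
      exact Fin.succ_injective _ (congrArg Subtype.val hab)
    have h2 := h.comp _ hinj
    simp only [Function.comp_def] at h2
    rw [show (fun i : Fin k => x i.succ - x 0) = fun i : Fin k => x i.succ -ᵥ x 0 from rfl]
    exact h2
  set W := Submodule.span ℝ (Set.range fun i : Fin k => x i.succ - x 0) with hW
  set u : E → ((E → ℝ) ⧸ W) := fun e => W.mkQ (Pi.single e (1 : ℝ)) with hu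
  have key : ∀ F : Finset E, LinearIndependent ℝ (AFam x F) ↔
      LinearIndependent ℝ (fun e : {e : E // e ∈ F} => u e.val) := fun F => afam_iff x hd F
  -- rank computations
  have hWrank : Module.finrank ℝ W = k := by
    rw [hW, finrank_span_eq_card hd, Fintype.card_fin]
  have hVrank : Module.finrank ℝ ((E → ℝ) ⧸ W) + k = Fintype.card E := by
    have h1 := Submodule.finrank_quotient_add_finrank W
    rw [hWrank] at h1
    rw [h1, Module.finrank_pi]
  have hspan : Submodule.span ℝ (Set.range u) = ⊤ := by
    have h1 : Set.range u = W.mkQ '' Set.range (fun e : E => Pi.single e (1 : ℝ)) := by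
      rw [← Set.range_comp]; rfl
    have h2 : Submodule.span ℝ (Set.range fun e : E => Pi.single e (1 : ℝ)) = ⊤ := by
      have := (Pi.basisFun ℝ E).span_eq
      have heq : Set.range (Pi.basisFun ℝ E) = Set.range fun e : E => Pi.single e (1 : ℝ) := by
        ext v; simp [Pi.basisFun_apply]
      rwa [heq] at this
    rw [h1, Submodule.span_image, h2, Submodule.map_top, Submodule.range_mkQ]
  refine ⟨?_, ?_, ?_, ?_, ?_⟩
  · -- empty set
    rw [key]
    haveI : IsEmpty {e : E // e ∈ (∅ : Finset E)} := ⟨fun a => Finset.notMem_empty a.1 a.2⟩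
    exact linearIndependent_empty_type
  · -- downward closure
    intro I J hIJ hJ
    rw [key] at hJ ⊢
    have hf : (fun e : {e : E // e ∈ I} => u e.val) =
        (fun e : {e : E // e ∈ J} => u e.val) ∘
          (fun a : {a : E // a ∈ I} => (⟨a.1, hIJ a.2⟩ : {a : E // a ∈ J})) := rfl
    rw [hf]
    exact hJ.comp _ (fun a b hab => Subtype.ext (by simpa using congrArg Subtype.val hab))
  · -- exchange
    intro I J hI hJ hcard
    rw [key] at hI hJ
    obtain ⟨e, heJ, he⟩ := exists_notin_aux u I J
      (by rw [finrank_span_eq_card hJ, Fintype.card_coe]; exact hcard)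
    have heI : e ∉ I := fun hmem => he (Submodule.subset_span ⟨⟨e, hmem⟩, rfl⟩)
    refine ⟨e, heJ, heI, ?_⟩
    rw [key]
    exact li_insert_aux u heI hI he
  · -- rank upper bound
    intro I hI
    have h1 := hI.fintype_card_le_finrank
    rw [Module.finrank_pi] at h1
    simpa [Fintype.card_sum, Fintype.card_coe, Nat.add_comm] using h1
  · -- rank attained
    obtain ⟨I, hIli, hIcard⟩ := exists_full_aux u hspan
    exact ⟨I, (key I).2 hIli, by omega⟩
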